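/- arXiv:2511.14740 — 3 statements merged into one kernel-verified Lean document; each statement's English description precedes it below -/
import Mathlib

section
/- Let X = (X_1,…,X_d) be a multivariate Poisson random vector, i.e. the X_j ~ Po(λ_j) are independent with λ = (λ_1,…,λ_d), λ_j ≥ 0, and let A = (a_{ij}) ∈ [0,1]^{c×d} be a matrix whose columns a_j satisfy |a_j| ≤ 1. Then the multinomial re-marking Y = A ∘ X is multivariate Poisson with parameter Aλ: the coordinates Y_i are independent with Y_i ~ Po((Aλ)_i) = Po(Σ_{j=1}^d a_{ij} λ_j). -/
open MeasureTheory ProbabilityTheory ENNReal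

/-- The multinomial probability mass function with parameters `n` and `a`, as an
`ℝ≥0∞`-valued function: `p(y) = (n choose y) ∏ i, a i ^ y i * (1 - |a|) ^ (n - |y|)`,
interpreted as `0` when `|y| > n`. -/
noncomputable def multinomialENN {c : ℕ} (n : ℕ) (a : Fin c → ℝ) (y : Fin c → ℕ) : ℝ≥0∞ :=
  if (∑ i, y i) ≤ n then
    ENNReal.ofReal (((n.factorial : ℝ) /
        ((∏ i, ((y i).factorial : ℝ)) * ((n - ∑ i, y i).factorial : ℝ)))
      * (∏ i, a i ^ y i) * (1 - ∑ i, a i) ^ (n - ∑ i, y i))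
  else 0

/-- The Poisson probability mass function with rate `lam ≥ 0`, as an `ℝ≥0∞`-valued
function: `p(k) = exp(-lam) * lam^k / k!`. -/
noncomputable def poissonENN (lam : ℝ) (k : ℕ) : ℝ≥0∞ :=
  ENNReal.ofReal (Real.exp (-lam) * lam ^ k / k.factorial)

lemma real_exp_eq_tsum (x : ℝ) : Real.exp x = ∑' n : ℕ, x ^ n / n.factorial := by
  rw [Real.exp_eq_exp_ℝ, NormedSpace.exp_eq_tsum_div]

lemma summable_aux (C x : ℝ) : Summable (fun n : ℕ => C * x ^ n / n.factorial) := by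
  simpa [mul_div_assoc] using Summable.mul_left C (Real.summable_pow_div_factorial x)

lemma tsum_exp_aux (C x : ℝ) :
    ∑' n : ℕ, C * x ^ n / n.factorial = C * Real.exp x := by
  simp_rw [mul_div_assoc]
  rw [tsum_mul_left, ← real_exp_eq_tsum]

lemma tsum_poissonENN {lam : ℝ} (h : 0 ≤ lam) : ∑' k : ℕ, poissonENN lam k = 1 := by
  unfold poissonENN
  rw [← ENNReal.ofReal_tsum_of_nonneg (fun n => by positivity)
      (summable_aux (Real.exp (-lam)) lam)]
  rw [tsum_exp_aux, ← Real.exp_add]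
  simp

/-- Auxiliary equivalence between `α × (Fin n → α)` and `Fin (n+1) → α`. -/
def finConsEquiv (α : Type*) (n : ℕ) : α × (Fin n → α) ≃ (Fin (n + 1) → α) where
  toFun p := Fin.cons p.1 p.2
  invFun y := (y 0, fun i => y i.succ)
  left_inv p := by simp
  right_inv y := Fin.cons_self_tail y

/-- Fubini for products of `ℝ≥0∞`-valued functions over a finite product of types. -/
lemma tsum_pi_fin {α : Type*} : ∀ {n : ℕ} (f : Fin n → α → ℝ≥0∞),
    ∑' y : Fin n → α, ∏ i, f i (y i) = ∏ i, ∑' a : α, f i a := by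
  intro n
  induction n with
  | zero =>
    intro f
    rw [tsum_eq_single (fun i => i.elim0) (fun b hb => (hb (funext fun i => i.elim0)).elim)]
    simp
  | succ n ih =>
    intro f
    calc ∑' y : Fin (n + 1) → α, ∏ i, f i (y i)
        = ∑' p : α × (Fin n → α), ∏ i, f i (Fin.cons (α := fun _ => α) p.1 p.2 i) :=
          by exact ((finConsEquiv α n).tsum_eq fun y => ∏ i, f i (y i)).symm
      _ = ∑' (a : α) (y : Fin n → α), ∏ i, f i (Fin.cons (α := fun _ => α) a y i) := by
          exact ENNReal.tsum_prod
            (f := fun a y => ∏ i, f i (Fin.cons (α := fun _ => α) a y i))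
      _ = ∑' (a : α) (y : Fin n → α), f 0 a * ∏ i : Fin n, f i.succ (y i) := by
          simp [Fin.prod_univ_succ]
      _ = (∑' a : α, f 0 a) * ∑' y : Fin n → α, ∏ i : Fin n, f i.succ (y i) := by
          simp_rw [ENNReal.tsum_mul_left]
          rw [ENNReal.tsum_mul_right]
      _ = ∏ i, ∑' a : α, f i a := by
          rw [ih fun i => f i.succ, Fin.prod_univ_succ]

/-- A measure of a preimage of a countable discrete set as a sum over fibers. -/
lemma measure_preimage_eq_tsum' {Ω α : Type*} [MeasurableSpace Ω] [MeasurableSpace α]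
    [MeasurableSingletonClass α] [Countable α] (P : Measure Ω)
    {W : Ω → α} (hW : Measurable W) (T : Set α) :
    P (W ⁻¹' T) = ∑' y : T, P (W ⁻¹' {(y : α)}) := by
  rw [← measure_iUnion (fun y y' hyy' => ?_) (fun y => hW (measurableSet_singleton _))]
  · congr 1
    ext ω
    simp
  · apply Set.disjoint_left.mpr
    intro ω h1 h2
    simp only [Set.mem_preimage, Set.mem_singleton_iff] at h1 h2
    exact hyy' (Subtype.ext (h1 ▸ h2))

/-- Additivity of the Poisson family: a multi-fold convolution of Poisson pmfs is the
Poisson pmf of the sum of the rates. -/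
lemma tsum_conv {d : ℕ} (μ : Fin d → ℝ) (hμ : ∀ j, 0 ≤ μ j) (k : ℕ) :
    ∑' w : Fin d → ℕ, (if ∑ j, w j = k then (1 : ℝ≥0∞) else 0) * ∏ j, poissonENN (μ j) (w j)
      = poissonENN (∑ j, μ j) k := by
  classical
  rw [tsum_eq_sum (s := Finset.piAntidiag Finset.univ k)
    (fun w hw => by
      have h : ¬ (∑ j, w j = k) := fun h => hw (by simp [Finset.mem_piAntidiag, h])
      simp [h])]
  have hterm : ∀ w ∈ Finset.piAntidiag Finset.univ k,
      (if ∑ j, w j = k then (1 : ℝ≥0∞) else 0) * ∏ j, poissonENN (μ j) (w j)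
        = ENNReal.ofReal (∏ j, (Real.exp (-μ j) * μ j ^ w j / (w j).factorial)) := by
    intro w hw
    rw [Finset.mem_piAntidiag] at hw
    rw [if_pos hw.1, one_mul, ENNReal.ofReal_prod_of_nonneg (fun j _ =>
      div_nonneg (mul_nonneg (Real.exp_nonneg _) (pow_nonneg (hμ j) _)) (Nat.cast_nonneg _))]
    rfl
  rw [Finset.sum_congr rfl hterm,
    ← ENNReal.ofReal_sum_of_nonneg (fun w _ => Finset.prod_nonneg fun j _ =>
      div_nonneg (mul_nonneg (Real.exp_nonneg _) (pow_nonneg (hμ j) _)) (Nat.cast_nonneg _))]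
  congr 1
  have hpow := Finset.sum_pow_eq_sum_piAntidiag Finset.univ μ k
  calc ∑ w ∈ Finset.piAntidiag Finset.univ k, ∏ j, (Real.exp (-μ j) * μ j ^ w j / (w j).factorial)
      = ∑ w ∈ Finset.piAntidiag Finset.univ k,
          Real.exp (-∑ j, μ j) / k.factorial
            * ((Nat.multinomial Finset.univ w : ℝ) * ∏ j, μ j ^ w j) := by
        refine Finset.sum_congr rfl fun w hw => ?_
        rw [Finset.mem_piAntidiag] at hw
        have hfac : ((∏ j, (w j).factorial : ℕ) : ℝ) * (Nat.multinomial Finset.univ w : ℝ)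
            = (k.factorial : ℝ) := by
          rw [← Nat.cast_mul, Nat.multinomial_spec, hw.1]
        have h1 : (∏ j, ((w j).factorial : ℝ)) ≠ 0 :=
          Finset.prod_ne_zero_iff.2 fun j _ => Nat.cast_ne_zero.2 (Nat.factorial_ne_zero _)
        have h2 : (k.factorial : ℝ) ≠ 0 := Nat.cast_ne_zero.2 (Nat.factorial_ne_zero _)
        rw [Finset.prod_div_distrib, Finset.prod_mul_distrib, ← Real.exp_sum,
          ← Finset.sum_neg_distrib]
        push_cast at hfac ⊢
        rw [div_mul_eq_mul_div, div_eq_div_iff h1 h2]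
        linear_combination (-(Real.exp (∑ x : Fin d, -μ x) * ∏ x : Fin d, μ x ^ w x)) * hfac
      _ = Real.exp (-∑ j, μ j) * (∑ j, μ j) ^ k / k.factorial := by
        rw [← Finset.mul_sum, ← hpow]
        ring

/-- Poisson thinning: mixing a multinomial pmf against a Poisson distribution on the
number of trials yields a product of Poisson pmfs. -/
lemma tsum_thinning {c : ℕ} (a : Fin c → ℝ) (ha : ∀ i, 0 ≤ a i) (hs : ∑ i, a i ≤ 1)
    {lam : ℝ} (hl : 0 ≤ lam) (z : Fin c → ℕ) :
    ∑' n : ℕ, poissonENN lam n * multinomialENN n a z = ∏ i, poissonENN (a i * lam) (z i) := by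
  classical
  set s := ∑ i, z i with hsdef
  set C : ℝ := Real.exp (-lam) * ((∏ i, a i ^ z i) * lam ^ s) / ∏ i, ((z i).factorial : ℝ)
    with hC
  set t : ℝ := lam * (1 - ∑ i, a i) with ht
  have hzfac : (0:ℝ) < ∏ i, ((z i).factorial : ℝ) :=
    Finset.prod_pos fun i _ => by exact_mod_cast (z i).factorial_pos
  have hCnn : 0 ≤ C := by
    apply div_nonneg _ (le_of_lt hzfac)
    exact mul_nonneg (Real.exp_nonneg _)
      (mul_nonneg (Finset.prod_nonneg fun i _ => pow_nonneg (ha i) _) (pow_nonneg hl _))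
  have htnn : 0 ≤ t := mul_nonneg hl (by linarith)
  -- shift the sum
  have hshift : ∑' n : ℕ, poissonENN lam n * multinomialENN n a z
      = ∑' m : ℕ, poissonENN lam (m + s) * multinomialENN (m + s) a z := by
    refine (Function.Injective.tsum_eq (g := fun m : ℕ => m + s) (add_left_injective s) ?_).symm
    intro n hn
    rcases le_or_gt s n with hle | hlt
    · exact ⟨n - s, Nat.sub_add_cancel hle⟩
    · exfalso
      apply hn
      have : multinomialENN n a z = 0 := if_neg (by omega)
      simp [this]
  rw [hshift]
  -- identify each term
  have hterm : ∀ m : ℕ, poissonENN lam (m + s) * multinomialENN (m + s) a z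
      = ENNReal.ofReal (C * t ^ m / m.factorial) := by
    intro m
    have hcond : s ≤ m + s := Nat.le_add_left _ _
    have hsub : m + s - s = m := by omega
    rw [poissonENN, multinomialENN, if_pos hcond, hsub,
      ← ENNReal.ofReal_mul (div_nonneg (mul_nonneg (Real.exp_nonneg _) (pow_nonneg hl _))
        (Nat.cast_nonneg _))]
    congr 1
    have hfacne : ((m + s).factorial : ℝ) ≠ 0 := Nat.cast_ne_zero.2 (Nat.factorial_ne_zero _)
    have hmfacne : ((m).factorial : ℝ) ≠ 0 := Nat.cast_ne_zero.2 (Nat.factorial_ne_zero _)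
    rw [hC, ht, mul_pow]
    field_simp
    ring
  rw [tsum_congr hterm,
    ← ENNReal.ofReal_tsum_of_nonneg
      (fun m => div_nonneg (mul_nonneg hCnn (pow_nonneg htnn _)) (Nat.cast_nonneg _))
      (summable_aux C t),
    tsum_exp_aux]
  -- final identification
  unfold poissonENN
  rw [← ENNReal.ofReal_prod_of_nonneg (fun i _ =>
    div_nonneg (mul_nonneg (Real.exp_nonneg _) (pow_nonneg (mul_nonneg (ha i) hl) _))
      (Nat.cast_nonneg _))]
  congr 1
  have hexp : Real.exp (∑ i, -(a i * lam)) = Real.exp (-lam) * Real.exp (lam * (1 - ∑ i, a i)) := by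
    rw [← Real.exp_add]
    congr 1
    rw [Finset.sum_neg_distrib, ← Finset.sum_mul]
    ring
  rw [Finset.prod_div_distrib, Finset.prod_mul_distrib, ← Real.exp_sum, hexp]
  simp_rw [mul_pow]
  rw [Finset.prod_mul_distrib, Finset.prod_pow_eq_pow_sum, ← hsdef, hC, ht]
  ring

/-- Let `X` be a multivariate Poisson random vector (independent coordinates
`X j ~ Po(lam j)`, `lam j ≥ 0`) and let `Y = A ∘ X` be the multinomial re-marking of `X`
with parameters `A ∈ [0,1]^{c×d}` whose columns sum to at most 1. Then `Y` is multivariate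
Poisson with parameter `A lam`: the coordinates `Y i` are independent with
`Y i ~ Po(∑ j, A i j * lam j)`. -/
theorem remarking_of_poisson
    {Ω : Type*} [MeasurableSpace Ω] (P : Measure Ω) [IsProbabilityMeasure P]
    {c d : ℕ} (A : Fin c → Fin d → ℝ)
    (hA : ∀ i j, A i j ∈ Set.Icc (0 : ℝ) 1) (hAcol : ∀ j, ∑ i, A i j ≤ 1)
    (lam : Fin d → ℝ) (hlam : ∀ j, 0 ≤ lam j)
    (X : Ω → Fin d → ℕ) (Z : Ω → Fin d → Fin c → ℕ) (Y : Ω → Fin c → ℕ)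
    (hXm : Measurable X) (hZm : Measurable Z)
    (hY : ∀ ω i, Y ω i = ∑ j, Z ω j i)
    (hXindep : iIndepFun (m := fun _ : Fin d => (inferInstance : MeasurableSpace ℕ))
      (fun j ω => X ω j) P)
    (hXdist : ∀ (j : Fin d) (k : ℕ), P {ω | X ω j = k} = poissonENN (lam j) k)
    (hMark : ∀ (x : Fin d → ℕ) (z : Fin d → Fin c → ℕ),
      P {ω | X ω = x ∧ Z ω = z}
        = P {ω | X ω = x} * ∏ j, multinomialENN (x j) (fun i => A i j) (z j)) :
    iIndepFun (m := fun _ : Fin c => (inferInstance : MeasurableSpace ℕ))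
        (fun i ω => Y ω i) P ∧
      ∀ (i : Fin c) (k : ℕ), P {ω | Y ω i = k} = poissonENN (∑ j, A i j * lam j) k := by
  classical
  set ν : Fin c → ℝ := fun i => ∑ j, A i j * lam j with hν
  have hνnn : ∀ i, 0 ≤ ν i := fun i =>
    Finset.sum_nonneg fun j _ => mul_nonneg (hA i j).1 (hlam j)
  -- the joint pmf of X
  have hXpmf : ∀ x : Fin d → ℕ, P {ω | X ω = x} = ∏ j, poissonENN (lam j) (x j) := by
    intro x
    have hset : {ω | X ω = x} = ⋂ j ∈ Finset.univ, (fun ω => X ω j) ⁻¹' {x j} := by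
      ext ω
      simp [funext_iff]
    rw [hset, hXindep.measure_inter_preimage_eq_mul Finset.univ
      (fun j _ => measurableSet_singleton _)]
    exact Finset.prod_congr rfl fun j _ => hXdist j (x j)
  -- the joint pmf of Z
  have hZpmf : ∀ z : Fin d → Fin c → ℕ,
      P {ω | Z ω = z} = ∏ j, ∏ i, poissonENN (A i j * lam j) (z j i) := by
    intro z
    have hmeas : ∀ x : Fin d → ℕ, MeasurableSet {ω | X ω = x ∧ Z ω = z} := by
      intro x
      have : {ω | X ω = x ∧ Z ω = z} = X ⁻¹' {x} ∩ Z ⁻¹' {z} := rfl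
      rw [this]
      exact (hXm (measurableSet_singleton _)).inter (hZm (measurableSet_singleton _))
    have hdisj : Pairwise (Function.onFun Disjoint
        fun x : Fin d → ℕ => {ω | X ω = x ∧ Z ω = z}) := by
      intro x x' hxx'
      apply Set.disjoint_left.mpr
      rintro ω ⟨h1, _⟩ ⟨h2, _⟩
      exact hxx' (h1 ▸ h2)
    have hunion : {ω | Z ω = z} = ⋃ x : Fin d → ℕ, {ω | X ω = x ∧ Z ω = z} := by
      ext ω
      simp
    rw [hunion, measure_iUnion hdisj hmeas]
    calc ∑' x : Fin d → ℕ, P {ω | X ω = x ∧ Z ω = z}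
        = ∑' x : Fin d → ℕ, ∏ j,
            (poissonENN (lam j) (x j) * multinomialENN (x j) (fun i => A i j) (z j)) := by
          refine tsum_congr fun x => ?_
          rw [hMark x z, hXpmf x, ← Finset.prod_mul_distrib]
      _ = ∏ j, ∑' n : ℕ, poissonENN (lam j) n * multinomialENN n (fun i => A i j) (z j) := by
          exact tsum_pi_fin fun j (n : ℕ) =>
            poissonENN (lam j) n * multinomialENN n (fun i => A i j) (z j)
      _ = ∏ j, ∏ i, poissonENN (A i j * lam j) (z j i) := by
          exact Finset.prod_congr rfl fun j _ =>
            tsum_thinning (fun i => A i j) (fun i => (hA i j).1) (hAcol j) (hlam j) (z j)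
  -- Y is measurable
  have hYm : Measurable Y := by
    have hYeq : Y = fun ω i => ∑ j, Z ω j i := funext fun ω => funext fun i => hY ω i
    rw [hYeq]
    exact measurable_pi_lambda _ fun i =>
      Finset.measurable_sum _ fun j _ =>
        ((measurable_pi_apply i).comp ((measurable_pi_apply j).comp hZm))
  have hYim : ∀ i : Fin c, Measurable fun ω => Y ω i :=
    fun i => (measurable_pi_apply i).comp hYm
  -- the joint pmf of Y
  have hYpmf : ∀ y : Fin c → ℕ, P {ω | Y ω = y} = ∏ i, poissonENN (ν i) (y i) := by
    intro y
    have hset : {ω | Y ω = y} = Z ⁻¹' {z : Fin d → Fin c → ℕ | ∀ i, ∑ j, z j i = y i} := by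
      ext ω
      simp only [Set.mem_setOf_eq, Set.mem_preimage, funext_iff]
      constructor
      · intro h i
        rw [← h i, hY]
      · intro h i
        rw [hY, h i]
    rw [hset, measure_preimage_eq_tsum' P hZm]
    refine Eq.trans (tsum_subtype {z : Fin d → Fin c → ℕ | ∀ i, ∑ j, z j i = y i}
      fun z => P {ω | Z ω = z}) ?_
    have hind : ∀ z : Fin d → Fin c → ℕ,
        Set.indicator {z : Fin d → Fin c → ℕ | ∀ i, ∑ j, z j i = y i}
            (fun z => P {ω | Z ω = z}) z
          = ∏ i, ((if ∑ j, z j i = y i then (1:ℝ≥0∞) else 0)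
              * ∏ j, poissonENN (A i j * lam j) (z j i)) := by
      intro z
      rw [Finset.prod_mul_distrib, Fintype.prod_boole, Set.indicator_apply]
      simp only [Set.mem_setOf_eq]
      by_cases h : ∀ i, ∑ j, z j i = y i
      · rw [if_pos h, if_pos h, one_mul, hZpmf z, Finset.prod_comm]
      · rw [if_neg h, if_neg h, zero_mul]
    refine Eq.trans (tsum_congr hind) ?_
    have hswap : ∑' z : Fin d → Fin c → ℕ, ∏ i, ((if ∑ j, z j i = y i then (1:ℝ≥0∞) else 0)
              * ∏ j, poissonENN (A i j * lam j) (z j i))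
        = ∑' w : Fin c → Fin d → ℕ, ∏ i, ((if ∑ j, w i j = y i then (1:ℝ≥0∞) else 0)
              * ∏ j, poissonENN (A i j * lam j) (w i j)) := by
      exact (Equiv.tsum_eq
        (⟨Function.swap, Function.swap, fun _ => rfl, fun _ => rfl⟩ :
          (Fin c → Fin d → ℕ) ≃ (Fin d → Fin c → ℕ))
        fun z => ∏ i, ((if ∑ j, z j i = y i then (1:ℝ≥0∞) else 0)
              * ∏ j, poissonENN (A i j * lam j) (z j i))).symm
    rw [hswap]
    refine Eq.trans (tsum_pi_fin fun i (w' : Fin d → ℕ) =>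
      (if ∑ j, w' j = y i then (1:ℝ≥0∞) else 0) * ∏ j, poissonENN (A i j * lam j) (w' j)) ?_
    exact Finset.prod_congr rfl fun i _ =>
      tsum_conv (fun j => A i j * lam j) (fun j => mul_nonneg (hA i j).1 (hlam j)) (y i)
  -- marginals of Y
  have hmarg : ∀ (i : Fin c) (k : ℕ), P {ω | Y ω i = k} = poissonENN (ν i) k := by
    intro i k
    rw [show {ω | Y ω i = k} = Y ⁻¹' {y : Fin c → ℕ | y i = k} from rfl,
      measure_preimage_eq_tsum' P hYm]
    refine Eq.trans (tsum_subtype {y : Fin c → ℕ | y i = k} fun y => P {ω | Y ω = y}) ?_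
    have hind : ∀ y : Fin c → ℕ,
        Set.indicator {y : Fin c → ℕ | y i = k} (fun y => P {ω | Y ω = y}) y
          = ∏ i', ((if i' = i then (if y i' = k then (1:ℝ≥0∞) else 0) else 1)
              * poissonENN (ν i') (y i')) := by
      intro y
      rw [Finset.prod_mul_distrib,
        Fintype.prod_ite_eq' i (fun i' => if y i' = k then (1:ℝ≥0∞) else 0),
        Set.indicator_apply]
      simp only [Set.mem_setOf_eq]
      by_cases h : y i = k
      · rw [if_pos h, if_pos h, one_mul, hYpmf y]
      · rw [if_neg h, if_neg h, zero_mul]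
    refine Eq.trans (tsum_congr hind) ?_
    refine Eq.trans (tsum_pi_fin fun i' (m : ℕ) =>
      (if i' = i then (if m = k then (1:ℝ≥0∞) else 0) else 1) * poissonENN (ν i') m) ?_
    have hcoord : ∀ i' : Fin c,
        (∑' m : ℕ, (if i' = i then (if m = k then (1:ℝ≥0∞) else 0) else 1)
          * poissonENN (ν i') m) = if i' = i then poissonENN (ν i) k else 1 := by
      intro i'
      by_cases h : i' = i
      · subst h
        have h1 : ∀ m : ℕ, m ≠ k →
            (if i' = i' then (if m = k then (1:ℝ≥0∞) else 0) else 1) * poissonENN (ν i') m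
              = 0 := by
          intro m hm
          simp [hm]
        rw [tsum_eq_single k h1]
        simp
      · simp only [if_neg h]
        simp only [one_mul]
        exact tsum_poissonENN (hνnn i')
    rw [Finset.prod_congr rfl fun i' _ => hcoord i',
      Fintype.prod_ite_eq' i (fun _ => poissonENN (ν i) k)]
  refine ⟨?_, hmarg⟩
  -- independence
  rw [iIndepFun_iff_measure_inter_preimage_eq_mul]
  intro S sets hsets
  have hmargset : ∀ i : Fin c, P ((fun ω => Y ω i) ⁻¹' sets i)
      = ∑' m : ℕ, (Set.indicator (sets i) (fun _ => (1:ℝ≥0∞)) m) * poissonENN (ν i) m := by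
    intro i
    rw [measure_preimage_eq_tsum' P (hYim i)]
    refine Eq.trans (tsum_subtype (sets i) fun m => P {ω | Y ω i = m}) ?_
    refine tsum_congr fun m => ?_
    by_cases h : m ∈ sets i
    · rw [Set.indicator_of_mem h, Set.indicator_of_mem h, one_mul]
      exact hmarg i m
    · rw [Set.indicator_of_notMem h, Set.indicator_of_notMem h, zero_mul]
  have hset : (⋂ i ∈ S, (fun ω => Y ω i) ⁻¹' sets i)
      = Y ⁻¹' {y : Fin c → ℕ | ∀ i ∈ S, y i ∈ sets i} := by
    ext ω
    simp
  rw [hset, measure_preimage_eq_tsum' P hYm]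
  refine Eq.trans (tsum_subtype {y : Fin c → ℕ | ∀ i ∈ S, y i ∈ sets i}
    fun y => P {ω | Y ω = y}) ?_
  have hind : ∀ y : Fin c → ℕ,
      Set.indicator {y : Fin c → ℕ | ∀ i ∈ S, y i ∈ sets i} (fun y => P {ω | Y ω = y}) y
        = ∏ i, ((if i ∈ S then Set.indicator (sets i) (fun _ => (1:ℝ≥0∞)) (y i) else 1)
            * poissonENN (ν i) (y i)) := by
    intro y
    rw [Finset.prod_mul_distrib]
    have hb : (∏ i, (if i ∈ S then Set.indicator (sets i) (fun _ => (1:ℝ≥0∞)) (y i) else 1))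
        = if ∀ i ∈ S, y i ∈ sets i then 1 else 0 := by
      simp_rw [Set.indicator_apply]
      rw [Fintype.prod_ite_mem S, Finset.prod_boole]
      congr
    rw [hb, Set.indicator_apply]
    simp only [Set.mem_setOf_eq]
    by_cases h : ∀ i ∈ S, y i ∈ sets i
    · rw [if_pos h, if_pos h, one_mul, hYpmf y]
    · rw [if_neg h, if_neg h, zero_mul]
  refine Eq.trans (tsum_congr hind) ?_
  refine Eq.trans (tsum_pi_fin fun i (m : ℕ) =>
    (if i ∈ S then Set.indicator (sets i) (fun _ => (1:ℝ≥0∞)) m else 1)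
      * poissonENN (ν i) m) ?_
  have hcoord : ∀ i : Fin c,
      (∑' m : ℕ, (if i ∈ S then Set.indicator (sets i) (fun _ => (1:ℝ≥0∞)) m else 1)
        * poissonENN (ν i) m) = if i ∈ S then P ((fun ω => Y ω i) ⁻¹' sets i) else 1 := by
    intro i
    by_cases h : i ∈ S
    · simp only [if_pos h]
      exact (hmargset i).symm
    · simp only [if_neg h, one_mul]
      exact tsum_poissonENN (hνnn i)
  rw [Finset.prod_congr rfl fun i _ => hcoord i, Fintype.prod_ite_mem S]
end

section
/- Let X = (X_1,…,X_d) be a multivariate Hermite random vector Herm(μ, Σ), i.e. X_i = U_i + Σ_j V_{ij} + Σ_k V_{ki} where U_i ~ Po(α_i) and V_{ij} ~ Po(β_{ij}) (1 ≤ i, j ≤ d) are all independent, with μ_i = α_i + Σ_j β_{ij} + Σ_k β_{ki}, Σ_{ii} = 2β_{ii}, and Σ_{ij} = β_{ij} + β_{ji} for i ≠ j. Let A = (a_{ij}) ∈ [0,1]^{c×d} be a matrix whose columns a_j satisfy |a_j| ≤ 1. Then the multinomial re-marking Y = A ∘ X is multivariate Hermite with parameters Herm(Aμ, A Σ Aᵀ),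 provided A Σ Aᵀ and Aμ admit such a representation; equivalently, the multivariate FMGF of Y is Φ_Y(t) = exp( (Aμ)ᵀ t + ½ tᵀ (A Σ Aᵀ) t ). -/
open MeasureTheory ProbabilityTheory ENNReal

lemma tsum_pi_prod {κ : Type*} [Countable κ] :
    ∀ (m : ℕ) (f : Fin m → κ → ℝ≥0∞),
      (∑' g : Fin m → κ, ∏ i, f i (g i)) = ∏ i, ∑' k, f i k := by
  intro m
  induction m with
  | zero =>
    intro f
    rw [tsum_eq_single (fun i : Fin 0 => (i.elim0 : κ))]
    · simp
    · intro b hb; exact absurd (funext fun i => i.elim0) hb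
  | succ m ih =>
    intro f
    rw [← (Fin.consEquiv (fun _ : Fin (m+1) => κ)).tsum_eq, ENNReal.tsum_prod']
    have : ∀ (a : κ) (g : Fin m → κ),
        (∏ i, f i ((Fin.consEquiv (fun _ : Fin (m+1) => κ)) (a, g) i))
          = f 0 a * ∏ i : Fin m, f i.succ (g i) := by
      intro a g
      rw [Fin.prod_univ_succ]
      simp [Fin.consEquiv]
    simp_rw [this, ENNReal.tsum_mul_left, ENNReal.tsum_mul_right, ih, Fin.prod_univ_succ]

lemma poissonENN_mgf {lam : ℝ} (hlam : 0 ≤ lam) {s : ℝ} (hs : 0 ≤ s) :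
    (∑' k : ℕ, poissonENN lam k * ENNReal.ofReal s ^ k)
      = ENNReal.ofReal (Real.exp (lam * (s - 1))) := by
  have h1 : ∀ k : ℕ, poissonENN lam k * ENNReal.ofReal s ^ k
      = ENNReal.ofReal (Real.exp (-lam) * ((lam * s) ^ k / k.factorial)) := by
    intro k
    rw [poissonENN, ← ENNReal.ofReal_pow hs, ← ENNReal.ofReal_mul (by positivity)]
    congr 1
    ring
  simp_rw [h1]
  rw [← ENNReal.ofReal_tsum_of_nonneg (fun k => by positivity)
    ((Real.summable_pow_div_factorial (lam * s)).mul_left _)]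
  congr 1
  rw [tsum_mul_left]
  have : (∑' k : ℕ, (lam * s) ^ k / k.factorial) = Real.exp (lam * s) := by
    rw [Real.exp_eq_exp_ℝ, NormedSpace.exp_eq_tsum_div]
  rw [this, ← Real.exp_add]
  ring_nf

lemma multinomial_real_key {c : ℕ} (n : ℕ) (b0 : ℝ) (b : Fin c → ℝ) :
    (∑ y ∈ Fintype.piFinset (fun _ : Fin c => Finset.range (n+1)),
      if (∑ i, y i) ≤ n then
        ((n.factorial : ℝ) / ((∏ i, ((y i).factorial : ℝ)) * ((n - ∑ i, y i).factorial : ℝ)))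
          * (∏ i, b i ^ y i) * b0 ^ (n - ∑ i, y i)
      else 0)
      = (b0 + ∑ i, b i) ^ n := by
  classical
  rw [← Finset.sum_filter]
  have hopt : b0 + ∑ i, b i = ∑ o : Option (Fin c), Option.elim o b0 b := by
    rw [Fintype.sum_option]
    rfl
  rw [hopt, Finset.sum_pow_eq_sum_piAntidiag]
  refine Finset.sum_nbij' (fun y : Fin c → ℕ => fun o : Option (Fin c) => Option.elim o (n - ∑ i, y i) y)
      (fun k : Option (Fin c) → ℕ => fun j => k (some j)) ?_ ?_ ?_ ?_ ?_
  · intro y hy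
    obtain ⟨_, hyn⟩ := Finset.mem_filter.mp hy
    rw [Finset.mem_piAntidiag]
    refine ⟨?_, fun i _ => Finset.mem_univ i⟩
    rw [Fintype.sum_option]
    simpa using Nat.sub_add_cancel hyn
  · intro k hk
    rw [Finset.mem_piAntidiag] at hk
    obtain ⟨hks, -⟩ := hk
    rw [Fintype.sum_option] at hks
    have hle : ∑ j, k (some j) ≤ n := le_of_add_le_right hks.le
    refine Finset.mem_filter.mpr ⟨?_, hle⟩
    refine Fintype.mem_piFinset.mpr fun j => Finset.mem_range.mpr (Nat.lt_succ_of_le ?_)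
    exact le_trans (Finset.single_le_sum (f := fun j => k (some j)) (fun _ _ => Nat.zero_le _) (Finset.mem_univ j)) hle
  · intro y hy
    obtain ⟨_, hyn⟩ := Finset.mem_filter.mp hy
    funext j
    rfl
  · intro k hk
    rw [Finset.mem_piAntidiag] at hk
    obtain ⟨hks, -⟩ := hk
    rw [Fintype.sum_option] at hks
    funext o
    cases o with
    | none => simp [← hks]
    | some j => rfl
  · intro y hy
    obtain ⟨_, hyn⟩ := Finset.mem_filter.mp hy
    have hsum : (∑ o : Option (Fin c), Option.elim o (n - ∑ i, y i) y) = n := by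
      rw [Fintype.sum_option]
      simpa using Nat.sub_add_cancel hyn
    have hspec := Nat.multinomial_spec Finset.univ
      (fun o : Option (Fin c) => Option.elim o (n - ∑ i, y i) y)
    rw [hsum] at hspec
    have hcast : (((∏ o : Option (Fin c), (Option.elim o (n - ∑ i, y i) y).factorial) : ℕ) : ℝ)
        * ((Nat.multinomial Finset.univ
            (fun o : Option (Fin c) => Option.elim o (n - ∑ i, y i) y)) : ℝ)
        = (n.factorial : ℝ) := by exact_mod_cast congrArg (Nat.cast (R := ℝ)) hspec
    have hprodopt : ((∏ o : Option (Fin c), (Option.elim o (n - ∑ i, y i) y).factorial : ℕ) : ℝ)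
        = ((n - ∑ i, y i).factorial : ℝ) * ∏ i, ((y i).factorial : ℝ) := by
      push_cast
      rw [Fintype.prod_option]
      rfl
    have hne : ((n - ∑ i, y i).factorial : ℝ) * ∏ i, ((y i).factorial : ℝ) ≠ 0 := by
      positivity
    have hmul : ((Nat.multinomial Finset.univ
            (fun o : Option (Fin c) => Option.elim o (n - ∑ i, y i) y)) : ℝ)
        = (n.factorial : ℝ) / ((∏ i, ((y i).factorial : ℝ)) * ((n - ∑ i, y i).factorial : ℝ)) := by
      rw [hprodopt] at hcast
      field_simp
      rw [← hcast]
      ring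
    rw [hmul.symm, Fintype.prod_option]
    simp only [Option.elim]
    ring

lemma multinomialENN_mgf {c : ℕ} (n : ℕ) {a : Fin c → ℝ} (ha : ∀ i, 0 ≤ a i)
    (ha1 : ∑ i, a i ≤ 1) {s : Fin c → ℝ} (hs : ∀ i, 0 ≤ s i) :
    (∑' y : Fin c → ℕ, multinomialENN n a y * ∏ i, ENNReal.ofReal (s i) ^ y i)
      = ENNReal.ofReal ((1 - ∑ i, a i + ∑ i, a i * s i) ^ n) := by
  classical
  set G : (Fin c → ℕ) → ℝ := fun y =>
    if (∑ i, y i) ≤ n then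
      ((n.factorial : ℝ) / ((∏ i, ((y i).factorial : ℝ)) * ((n - ∑ i, y i).factorial : ℝ)))
        * (∏ i, (a i * s i) ^ y i) * (1 - ∑ i, a i) ^ (n - ∑ i, y i)
    else 0 with hG
  have hb0 : (0:ℝ) ≤ 1 - ∑ i, a i := by linarith
  have hGnn : ∀ y, 0 ≤ G y := by
    intro y
    rw [hG]
    dsimp only
    split
    · exact mul_nonneg (mul_nonneg (by positivity)
        (Finset.prod_nonneg fun i _ => pow_nonneg (mul_nonneg (ha i) (hs i)) _))
        (pow_nonneg hb0 _)
    · exact le_refl 0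
  have hterm : ∀ y : Fin c → ℕ,
      multinomialENN n a y * ∏ i, ENNReal.ofReal (s i) ^ y i = ENNReal.ofReal (G y) := by
    intro y
    rw [multinomialENN, hG]
    dsimp only
    split
    · have hp : (∏ i, ENNReal.ofReal (s i) ^ y i) = ENNReal.ofReal (∏ i, s i ^ y i) := by
        rw [ENNReal.ofReal_prod_of_nonneg (fun i _ => pow_nonneg (hs i) _)]
        exact Finset.prod_congr rfl fun i _ => (ENNReal.ofReal_pow (hs i) _).symm
      rw [hp, ← ENNReal.ofReal_mul (mul_nonneg (mul_nonneg (by positivity)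
        (Finset.prod_nonneg fun i _ => pow_nonneg (ha i) _)) (pow_nonneg hb0 _))]
      congr 1
      simp_rw [mul_pow]
      rw [Finset.prod_mul_distrib]
      ring
    · simp
  have h0 : ∀ y ∉ Fintype.piFinset (fun _ : Fin c => Finset.range (n+1)),
      multinomialENN n a y * ∏ i, ENNReal.ofReal (s i) ^ y i = 0 := by
    intro y hy
    have hnle : ¬ (∑ i, y i ≤ n) := by
      intro hle
      exact hy (Fintype.mem_piFinset.mpr fun i => Finset.mem_range.mpr (Nat.lt_succ_of_le
        (le_trans (Finset.single_le_sum (fun _ _ => Nat.zero_le _) (Finset.mem_univ i)) hle)))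
    rw [multinomialENN, if_neg hnle, zero_mul]
  rw [tsum_eq_sum h0]
  calc (∑ y ∈ Fintype.piFinset (fun _ : Fin c => Finset.range (n+1)),
          multinomialENN n a y * ∏ i, ENNReal.ofReal (s i) ^ y i)
      = ∑ y ∈ Fintype.piFinset (fun _ : Fin c => Finset.range (n+1)), ENNReal.ofReal (G y) :=
        Finset.sum_congr rfl fun y _ => hterm y
    _ = ENNReal.ofReal (∑ y ∈ Fintype.piFinset (fun _ : Fin c => Finset.range (n+1)), G y) :=
        (ENNReal.ofReal_sum_of_nonneg fun y _ => hGnn y).symm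
    _ = ENNReal.ofReal ((1 - ∑ i, a i + ∑ i, a i * s i) ^ n) := by
        congr 1
        have hkey := multinomial_real_key n (1 - ∑ i, a i) (fun i => a i * s i)
        rw [← hkey]

/-- Let `X ~ Herm(μ, Σ)` be a multivariate Hermite random vector: `X` has the distribution
of `(U i + ∑ j, V i j + ∑ k, V k i)_i` for independent `U i ~ Po(α i)`,
`V i j ~ Po(β i j)`, with `μ i = α i + ∑ j, β i j + ∑ k, β k i`, `Σ i i = 2 β i i` and
`Σ i j = β i j + β j i` for `i ≠ j`. Let `Y = A ∘ X` be the multinomial re-marking of `X`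
with parameters `A ∈ [0,1]^{c×d}` whose columns sum to at most 1. Then
`Y ~ Herm(A μ, A Σ Aᵀ)` is multivariate Hermite; equivalently, its multivariate factorial
moment generating function is `Φ_Y(t) = exp((A μ)ᵀ t + ½ tᵀ (A Σ Aᵀ) t)`. -/
theorem remarking_of_hermite
    {Ω : Type*} [MeasurableSpace Ω] (P : Measure Ω) [IsProbabilityMeasure P]
    {c d : ℕ} (A : Fin c → Fin d → ℝ)
    (hA : ∀ i j, A i j ∈ Set.Icc (0 : ℝ) 1) (hAcol : ∀ j, ∑ i, A i j ≤ 1)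
    (α : Fin d → ℝ) (β : Fin d → Fin d → ℝ)
    (hα : ∀ i, 0 ≤ α i) (hβ : ∀ i j, 0 ≤ β i j)
    (μ : Fin d → ℝ) (Sig : Fin d → Fin d → ℝ)
    (hμ : ∀ i, μ i = α i + (∑ j, β i j) + ∑ k, β k i)
    (hSdiag : ∀ i, Sig i i = 2 * β i i)
    (hSoff : ∀ i j, i ≠ j → Sig i j = β i j + β j i)
    (X : Ω → Fin d → ℕ) (Z : Ω → Fin d → Fin c → ℕ) (Y : Ω → Fin c → ℕ)
    (hXm : Measurable X) (hZm : Measurable Z)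
    (hY : ∀ ω i, Y ω i = ∑ j, Z ω j i)
    (hXdist : ∀ x : Fin d → ℕ, P {ω | X ω = x}
      = ∑' u : Fin d → ℕ, ∑' v : Fin d → Fin d → ℕ,
          if (∀ i, u i + (∑ j, v i j) + ∑ j, v j i = x i) then
            (∏ i, poissonENN (α i) (u i)) * ∏ i, ∏ j, poissonENN (β i j) (v i j)
          else 0)
    (hMark : ∀ (x : Fin d → ℕ) (z : Fin d → Fin c → ℕ),
      P {ω | X ω = x ∧ Z ω = z}
        = P {ω | X ω = x} * ∏ j, multinomialENN (x j) (fun i => A i j) (z j)) :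
    ∀ t : Fin c → ℝ, (∀ i, 1 + t i ∈ Set.Icc (0 : ℝ) 1) →
      ∫ ω, ∏ i, (1 + t i) ^ (Y ω i) ∂P
        = Real.exp ((∑ i, (∑ j, A i j * μ j) * t i)
            + (1 / 2) * ∑ i, ∑ i', t i * (∑ j, ∑ j', A i j * Sig j j' * A i' j') * t i') := by
  intro t ht
  classical
  have hS0 : ∀ i, (0:ℝ) ≤ 1 + t i := fun i => (ht i).1
  set q : Fin d → ℝ := fun j => 1 + ∑ i, A i j * t i with hqdef
  have hq0 : ∀ j, 0 ≤ q j := by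
    intro j
    have h2 : -(∑ i, A i j) ≤ ∑ i, A i j * t i := by
      rw [← Finset.sum_neg_distrib]
      refine Finset.sum_le_sum fun i _ => ?_
      have h1 : (-1 : ℝ) ≤ t i := by have := (ht i).1; linarith
      nlinarith [(hA i j).1]
    have := hAcol j
    simp only [hqdef]
    linarith
  set W : Ω → (Fin d → ℕ) × (Fin d → Fin c → ℕ) := fun ω => (X ω, Z ω) with hWdef
  have hWm : Measurable W := hXm.prodMk hZm
  set g : (Fin d → Fin c → ℕ) → ℝ := fun z => ∏ i, (1 + t i) ^ (∑ j, z j i) with hg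
  -- Step 1
  have step1 : ∫ ω, ∏ i, (1 + t i) ^ (Y ω i) ∂P
      = (∑' x : Fin d → ℕ, ∑' z : Fin d → Fin c → ℕ,
          ENNReal.ofReal (g z) * P {ω | X ω = x ∧ Z ω = z}).toReal := by
    have hint : ∫ ω, ∏ i, (1 + t i) ^ (Y ω i) ∂P = ∫ ω, g (Z ω) ∂P := by
      refine integral_congr_ae (Filter.Eventually.of_forall fun ω => ?_)
      simp only [hg]
      exact Finset.prod_congr rfl fun i _ => by rw [hY]
    rw [hint]
    rw [integral_eq_lintegral_of_nonneg_ae (Filter.Eventually.of_forall fun ω =>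
          Finset.prod_nonneg fun i _ => pow_nonneg (hS0 i) _)
        (((measurable_of_countable g).comp hZm).aestronglyMeasurable)]
    congr 1
    calc ∫⁻ ω, ENNReal.ofReal (g (Z ω)) ∂P
        = ∫⁻ p, ENNReal.ofReal (g p.2) ∂(P.map W) := by
          rw [lintegral_map (measurable_of_countable _) hWm]
      _ = ∑' p : (Fin d → ℕ) × (Fin d → Fin c → ℕ),
            ENNReal.ofReal (g p.2) * (P.map W) {p} := lintegral_countable' _
      _ = ∑' x, ∑' z, ENNReal.ofReal (g z) * P {ω | X ω = x ∧ Z ω = z} := by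
          rw [← ENNReal.tsum_prod
            (f := fun x z => ENNReal.ofReal (g z) * P {ω | X ω = x ∧ Z ω = z})]
          refine tsum_congr fun p => ?_
          congr 1
          rw [Measure.map_apply hWm (measurableSet_singleton p)]
          congr 1
          ext ω
          simp [hWdef, Prod.ext_iff]
  -- Step 2
  have step2 : ∀ x : Fin d → ℕ,
      (∑' z : Fin d → Fin c → ℕ, ENNReal.ofReal (g z) * P {ω | X ω = x ∧ Z ω = z})
        = P {ω | X ω = x} * ∏ j, (ENNReal.ofReal (q j)) ^ x j := by
    intro x
    have hgz : ∀ z : Fin d → Fin c → ℕ, ENNReal.ofReal (g z)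
        = ∏ j, ∏ i, ENNReal.ofReal (1 + t i) ^ (z j i) := by
      intro z
      rw [hg]
      dsimp only
      rw [show (∏ i, (1 + t i) ^ (∑ j, z j i)) = ∏ j, ∏ i, (1 + t i) ^ (z j i) by
        rw [Finset.prod_comm]
        exact Finset.prod_congr rfl fun i _ => (Finset.prod_pow_eq_pow_sum _ _ _).symm]
      rw [ENNReal.ofReal_prod_of_nonneg (fun j _ => Finset.prod_nonneg fun i _ =>
        pow_nonneg (hS0 i) _)]
      refine Finset.prod_congr rfl fun j _ => ?_
      rw [ENNReal.ofReal_prod_of_nonneg (fun i _ => pow_nonneg (hS0 i) _)]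
      exact Finset.prod_congr rfl fun i _ => (ENNReal.ofReal_pow (hS0 i) _)
    have hpt : ∀ z, ENNReal.ofReal (g z) * P {ω | X ω = x ∧ Z ω = z}
        = P {ω | X ω = x} * ∏ j, (multinomialENN (x j) (fun i => A i j) (z j)
            * ∏ i, ENNReal.ofReal (1 + t i) ^ (z j i)) := by
      intro z
      rw [hMark, hgz, Finset.prod_mul_distrib]
      ring
    rw [tsum_congr hpt, ENNReal.tsum_mul_left]
    congr 1
    rw [tsum_pi_prod d (fun j y => multinomialENN (x j) (fun i => A i j) y
        * ∏ i, ENNReal.ofReal (1 + t i) ^ (y i))]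
    refine Finset.prod_congr rfl fun j _ => ?_
    rw [multinomialENN_mgf (x j) (fun i => (hA i j).1) (hAcol j) (fun i => hS0 i)]
    rw [show (1 - ∑ i, A i j + ∑ i, A i j * (1 + t i)) = q j by
      simp only [hqdef, mul_add, mul_one, Finset.sum_add_distrib]
      ring]
    exact ENNReal.ofReal_pow (hq0 j) _
  -- Step 3
  have step3 : (∑' x : Fin d → ℕ, P {ω | X ω = x} * ∏ j, (ENNReal.ofReal (q j)) ^ x j)
      = ENNReal.ofReal (Real.exp ((∑ i, α i * (q i - 1))
          + ∑ j, ∑ k, β j k * (q j * q k - 1))) := by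
    set Qe : Fin d → ℝ≥0∞ := fun j => ENNReal.ofReal (q j) with hQe
    set PU : (Fin d → ℕ) → ℝ≥0∞ := fun u => ∏ i, poissonENN (α i) (u i) with hPU
    set PV : (Fin d → Fin d → ℕ) → ℝ≥0∞ :=
      fun v => ∏ i, ∏ j, poissonENN (β i j) (v i j) with hPV
    have h1 : ∀ x : Fin d → ℕ, P {ω | X ω = x} * ∏ j, Qe j ^ x j
        = ∑' u : Fin d → ℕ, ∑' v : Fin d → Fin d → ℕ,
            (if (∀ i, u i + (∑ j, v i j) + ∑ j, v j i = x i) then PU u * PV v else 0)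
              * ∏ j, Qe j ^ x j := by
      intro x
      rw [hXdist, ← ENNReal.tsum_mul_right]
      exact tsum_congr fun u => (ENNReal.tsum_mul_right).symm
    rw [tsum_congr h1, ENNReal.tsum_comm]
    have h2 : (∑' (u : Fin d → ℕ) (x : Fin d → ℕ) (v : Fin d → Fin d → ℕ),
          (if (∀ i, u i + (∑ j, v i j) + ∑ j, v j i = x i) then PU u * PV v else 0)
            * ∏ j, Qe j ^ x j)
        = ∑' (u : Fin d → ℕ) (v : Fin d → Fin d → ℕ) (x : Fin d → ℕ),
          (if (∀ i, u i + (∑ j, v i j) + ∑ j, v j i = x i) then PU u * PV v else 0)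
            * ∏ j, Qe j ^ x j := tsum_congr fun u => ENNReal.tsum_comm
    rw [h2]
    have h3 : ∀ (u : Fin d → ℕ) (v : Fin d → Fin d → ℕ),
        (∑' x : Fin d → ℕ,
            (if (∀ i, u i + (∑ j, v i j) + ∑ j, v j i = x i) then PU u * PV v else 0)
              * ∏ j, Qe j ^ x j)
          = (PU u * ∏ j, Qe j ^ u j) * (PV v * ∏ j, ∏ k, (Qe j * Qe k) ^ v j k) := by
      intro u v
      rw [tsum_eq_single (fun i => u i + (∑ j, v i j) + ∑ j, v j i) ?_]
      · rw [if_pos (fun i => rfl)]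
        have e2 : (∏ j, Qe j ^ (∑ k, v k j)) = ∏ j, ∏ k, Qe k ^ v j k := by
          rw [show (∏ j, Qe j ^ (∑ k, v k j)) = ∏ j, ∏ k, Qe j ^ v k j from
            Finset.prod_congr rfl fun j _ => (Finset.prod_pow_eq_pow_sum _ _ _).symm]
          exact Finset.prod_comm
        have e1 : (∏ j, Qe j ^ (∑ k, v j k)) = ∏ j, ∏ k, Qe j ^ v j k :=
          Finset.prod_congr rfl fun j _ => (Finset.prod_pow_eq_pow_sum _ _ _).symm
        have hsplit : (∏ j, Qe j ^ (u j + (∑ k, v j k) + ∑ k, v k j))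
            = (∏ j, Qe j ^ u j) * (∏ j, ∏ k, Qe j ^ v j k) * (∏ j, ∏ k, Qe k ^ v j k) := by
          calc (∏ j, Qe j ^ (u j + (∑ k, v j k) + ∑ k, v k j))
              = ∏ j, (Qe j ^ u j * Qe j ^ (∑ k, v j k) * Qe j ^ (∑ k, v k j)) := by
                refine Finset.prod_congr rfl fun j _ => ?_
                rw [pow_add, pow_add]
            _ = (∏ j, Qe j ^ u j) * (∏ j, Qe j ^ (∑ k, v j k)) * (∏ j, Qe j ^ (∑ k, v k j)) := by
                rw [Finset.prod_mul_distrib, Finset.prod_mul_distrib]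
            _ = (∏ j, Qe j ^ u j) * (∏ j, ∏ k, Qe j ^ v j k) * (∏ j, ∏ k, Qe k ^ v j k) := by
                rw [e1, e2]
        have e3 : (∏ j, ∏ k, Qe j ^ v j k) * (∏ j, ∏ k, Qe k ^ v j k)
            = ∏ j, ∏ k, (Qe j * Qe k) ^ v j k := by
          rw [← Finset.prod_mul_distrib]
          refine Finset.prod_congr rfl fun j _ => ?_
          rw [← Finset.prod_mul_distrib]
          exact Finset.prod_congr rfl fun k _ => (mul_pow _ _ _).symm
        rw [hsplit, ← e3]
        ring
      · intro b hb
        rw [if_neg, zero_mul]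
        intro hcond
        exact hb (funext fun i => (hcond i).symm)
    have h3' : (∑' (u : Fin d → ℕ) (v : Fin d → Fin d → ℕ) (x : Fin d → ℕ),
          (if (∀ i, u i + (∑ j, v i j) + ∑ j, v j i = x i) then PU u * PV v else 0)
            * ∏ j, Qe j ^ x j)
        = ∑' (u : Fin d → ℕ) (v : Fin d → Fin d → ℕ),
            (PU u * ∏ j, Qe j ^ u j) * (PV v * ∏ j, ∏ k, (Qe j * Qe k) ^ v j k) :=
      tsum_congr fun u => tsum_congr fun v => h3 u v
    rw [h3']
    have h4 : (∑' (u : Fin d → ℕ) (v : Fin d → Fin d → ℕ),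
          (PU u * ∏ j, Qe j ^ u j) * (PV v * ∏ j, ∏ k, (Qe j * Qe k) ^ v j k))
        = (∑' u : Fin d → ℕ, PU u * ∏ j, Qe j ^ u j)
          * (∑' v : Fin d → Fin d → ℕ, PV v * ∏ j, ∏ k, (Qe j * Qe k) ^ v j k) := by
      rw [← ENNReal.tsum_mul_right]
      exact tsum_congr fun u => ENNReal.tsum_mul_left
    rw [h4]
    have hU : (∑' u : Fin d → ℕ, PU u * ∏ j, Qe j ^ u j)
        = ENNReal.ofReal (Real.exp (∑ i, α i * (q i - 1))) := by
      have hmerge : ∀ u : Fin d → ℕ, PU u * ∏ j, Qe j ^ u j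
          = ∏ i, (poissonENN (α i) (u i) * Qe i ^ u i) := by
        intro u
        rw [hPU, Finset.prod_mul_distrib]
      rw [tsum_congr hmerge, tsum_pi_prod d (fun i k => poissonENN (α i) k * Qe i ^ k)]
      calc (∏ i, ∑' k : ℕ, poissonENN (α i) k * Qe i ^ k)
          = ∏ i, ENNReal.ofReal (Real.exp (α i * (q i - 1))) :=
            Finset.prod_congr rfl fun i _ => poissonENN_mgf (hα i) (hq0 i)
        _ = ENNReal.ofReal (∏ i, Real.exp (α i * (q i - 1))) :=
            (ENNReal.ofReal_prod_of_nonneg fun i _ => Real.exp_nonneg _).symm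
        _ = _ := by rw [← Real.exp_sum]
    have hV : (∑' v : Fin d → Fin d → ℕ, PV v * ∏ j, ∏ k, (Qe j * Qe k) ^ v j k)
        = ENNReal.ofReal (Real.exp (∑ j, ∑ k, β j k * (q j * q k - 1))) := by
      have hmerge : ∀ v : Fin d → Fin d → ℕ, PV v * ∏ j, ∏ k, (Qe j * Qe k) ^ v j k
          = ∏ j, (∏ k, (poissonENN (β j k) (v j k) * (Qe j * Qe k) ^ v j k)) := by
        intro v
        rw [hPV, ← Finset.prod_mul_distrib]
        exact Finset.prod_congr rfl fun j _ => (Finset.prod_mul_distrib).symm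
      rw [tsum_congr hmerge, tsum_pi_prod d (fun j (w : Fin d → ℕ) =>
        ∏ k, (poissonENN (β j k) (w k) * (Qe j * Qe k) ^ w k))]
      have h6 : ∀ j, (∑' w : Fin d → ℕ, ∏ k, (poissonENN (β j k) (w k) * (Qe j * Qe k) ^ w k))
          = ENNReal.ofReal (Real.exp (∑ k, β j k * (q j * q k - 1))) := by
        intro j
        rw [tsum_pi_prod d (fun k m => poissonENN (β j k) m * (Qe j * Qe k) ^ m)]
        calc (∏ k, ∑' m : ℕ, poissonENN (β j k) m * (Qe j * Qe k) ^ m)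
            = ∏ k, ENNReal.ofReal (Real.exp (β j k * (q j * q k - 1))) := by
              refine Finset.prod_congr rfl fun k _ => ?_
              rw [show Qe j * Qe k = ENNReal.ofReal (q j * q k) from
                (ENNReal.ofReal_mul (hq0 j)).symm]
              exact poissonENN_mgf (hβ j k) (mul_nonneg (hq0 j) (hq0 k))
          _ = _ := by
              rw [← ENNReal.ofReal_prod_of_nonneg fun k _ => Real.exp_nonneg _, ← Real.exp_sum]
      calc (∏ j, ∑' w : Fin d → ℕ, ∏ k, (poissonENN (β j k) (w k) * (Qe j * Qe k) ^ w k))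
          = ∏ j, ENNReal.ofReal (Real.exp (∑ k, β j k * (q j * q k - 1))) :=
            Finset.prod_congr rfl fun j _ => h6 j
        _ = _ := by
            rw [← ENNReal.ofReal_prod_of_nonneg fun j _ => Real.exp_nonneg _, ← Real.exp_sum]
    rw [hU, hV, ← ENNReal.ofReal_mul (Real.exp_nonneg _), ← Real.exp_add]
  -- Final real algebra
  have final : ((∑ i, α i * (q i - 1)) + ∑ j, ∑ k, β j k * (q j * q k - 1))
      = (∑ i, (∑ j, A i j * μ j) * t i)
          + (1 / 2) * ∑ i, ∑ i', t i * (∑ j, ∑ j', A i j * Sig j j' * A i' j') * t i' := by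
    set x : Fin d → ℝ := fun j => ∑ i, A i j * t i with hx
    have hq : ∀ j, q j = 1 + x j := fun j => by rw [hqdef]
    have hSig : ∀ j k, Sig j k = β j k + β k j := by
      intro j k
      by_cases h : j = k
      · subst h; rw [hSdiag]; ring
      · exact hSoff j k h
    have lin : ∑ i, (∑ j, A i j * μ j) * t i = ∑ j, μ j * x j := by
      simp_rw [Finset.sum_mul]
      rw [Finset.sum_comm]
      refine Finset.sum_congr rfl fun j _ => ?_
      rw [hx]
      dsimp only
      rw [Finset.mul_sum]
      exact Finset.sum_congr rfl fun i _ => by ring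
    have quad : ∑ i, ∑ i', t i * (∑ j, ∑ j', A i j * Sig j j' * A i' j') * t i'
        = ∑ j, ∑ j', Sig j j' * (x j * x j') := by
      have lhs1 : ∀ i i', t i * (∑ j, ∑ j', A i j * Sig j j' * A i' j') * t i'
          = ∑ j, ∑ j', A i j * t i * Sig j j' * (A i' j' * t i') := by
        intro i i'
        rw [Finset.mul_sum, Finset.sum_mul]
        refine Finset.sum_congr rfl fun j _ => ?_
        rw [Finset.mul_sum, Finset.sum_mul]
        exact Finset.sum_congr rfl fun j' _ => by ring
      have rhs1 : ∀ (j j' : Fin d), Sig j j' * (x j * x j')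
          = ∑ i, ∑ i', A i j * t i * Sig j j' * (A i' j' * t i') := by
        intro j j'
        have hxx : x j * x j' = ∑ i, ∑ i', (A i j * t i) * (A i' j' * t i') := by
          rw [hx]
          exact Finset.sum_mul_sum _ _ _ _
        rw [hxx, Finset.mul_sum]
        refine Finset.sum_congr rfl fun i _ => ?_
        rw [Finset.mul_sum]
        exact Finset.sum_congr rfl fun i' _ => by ring
      simp_rw [lhs1, rhs1]
      calc (∑ i, ∑ i', ∑ j, ∑ j', A i j * t i * Sig j j' * (A i' j' * t i'))
          = ∑ i, ∑ j, ∑ i', ∑ j', A i j * t i * Sig j j' * (A i' j' * t i') :=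
            Finset.sum_congr rfl fun i _ => Finset.sum_comm
        _ = ∑ j, ∑ i, ∑ i', ∑ j', A i j * t i * Sig j j' * (A i' j' * t i') :=
            Finset.sum_comm
        _ = ∑ j, ∑ i, ∑ j', ∑ i', A i j * t i * Sig j j' * (A i' j' * t i') :=
            Finset.sum_congr rfl fun j _ => Finset.sum_congr rfl fun i _ => Finset.sum_comm
        _ = ∑ j, ∑ j', ∑ i, ∑ i', A i j * t i * Sig j j' * (A i' j' * t i') :=
            Finset.sum_congr rfl fun j _ => Finset.sum_comm
    rw [lin, quad]
    have hqa : ∀ i, α i * (q i - 1) = α i * x i := fun i => by rw [hq]; ring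
    have hqq : ∀ j k, β j k * (q j * q k - 1)
        = β j k * x j + β j k * x k + β j k * (x j * x k) := by
      intro j k; rw [hq, hq]; ring
    simp_rw [hqa, hqq, Finset.sum_add_distrib, hμ, hSig, add_mul, Finset.sum_add_distrib,
      Finset.sum_mul]
    have hswap1 : (∑ j, ∑ k, β j k * x k) = ∑ j, ∑ k, β k j * x j := Finset.sum_comm
    have hswap2 : (∑ j, ∑ k, β k j * (x j * x k)) = ∑ j, ∑ k, β j k * (x j * x k) := by
      rw [Finset.sum_comm]
      exact Finset.sum_congr rfl fun j _ => Finset.sum_congr rfl fun k _ => by ring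
    linarith [hswap1, hswap2]
  rw [step1]
  rw [tsum_congr step2, step3, ENNReal.toReal_ofReal (Real.exp_nonneg _), final]
end

section
/- Let X be a random variable taking values in ℕ with finite second moment, let r ∈ (0,1) and b = 1 − r, and let (R, B) = (r, b) ∘ X be the multinomial marking of X with parameters (r, b), representing the numbers of red and blue balls. Then: (i) if Var(X) < E[X] then Cov(R, B) < 0; (ii) if Var(X) > E[X] then Cov(R, B) > 0; (iii) if Var(X) = E[X] then Cov(R, B) = 0. -/
open MeasureTheory ProbabilityTheory ENNReal Finset

section BinomAux

lemma binom_base (r b : ℝ) (hrb : r + b = 1) (n : ℕ) :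
    ∑ k ∈ range (n + 1), (n.choose k : ℝ) * r ^ k * b ^ (n - k) = 1 := by
  have h := add_pow r b n
  rw [hrb, one_pow] at h
  rw [h]
  exact Finset.sum_congr rfl fun k _ => by ring

lemma binom_mom1 (r b : ℝ) (hrb : r + b = 1) (n : ℕ) :
    ∑ k ∈ range (n + 1), (k : ℝ) * ((n.choose k : ℝ) * r ^ k * b ^ (n - k)) = n * r := by
  induction n with
  | zero => simp
  | succ m _ =>
    rw [Finset.sum_range_succ']
    have key : ∀ j ∈ range (m + 1),
        ((j + 1 : ℕ) : ℝ) * (((m + 1).choose (j + 1) : ℝ) * r ^ (j + 1) * b ^ (m + 1 - (j + 1)))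
          = ((m : ℝ) + 1) * r * ((m.choose j : ℝ) * r ^ j * b ^ (m - j)) := by
      intro j _
      have hc : (m + 1) * m.choose j = (m + 1).choose (j + 1) * (j + 1) :=
        Nat.add_one_mul_choose_eq m j
      have hc' : ((m : ℝ) + 1) * (m.choose j : ℝ) = ((m + 1).choose (j + 1) : ℝ) * ((j : ℝ) + 1) := by
        exact_mod_cast hc
      have he : m + 1 - (j + 1) = m - j := by omega
      rw [he]
      push_cast
      linear_combination (-(r ^ j * r * b ^ (m - j))) * hc'
    rw [Finset.sum_congr rfl key]
    rw [← Finset.mul_sum, binom_base r b hrb m]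
    push_cast
    ring

lemma binom_mom2 (r b : ℝ) (hrb : r + b = 1) (n : ℕ) :
    ∑ k ∈ range (n + 1), (k : ℝ) * ((k : ℝ) - 1) * ((n.choose k : ℝ) * r ^ k * b ^ (n - k))
      = (n : ℝ) * ((n : ℝ) - 1) * r ^ 2 := by
  induction n with
  | zero => simp
  | succ m _ =>
    rw [Finset.sum_range_succ']
    have key : ∀ j ∈ range (m + 1),
        ((j + 1 : ℕ) : ℝ) * (((j + 1 : ℕ) : ℝ) - 1) *
            (((m + 1).choose (j + 1) : ℝ) * r ^ (j + 1) * b ^ (m + 1 - (j + 1)))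
          = ((m : ℝ) + 1) * r * ((j : ℝ) * ((m.choose j : ℝ) * r ^ j * b ^ (m - j))) := by
      intro j _
      have hc : (m + 1) * m.choose j = (m + 1).choose (j + 1) * (j + 1) :=
        Nat.add_one_mul_choose_eq m j
      have hc' : ((m : ℝ) + 1) * (m.choose j : ℝ) = ((m + 1).choose (j + 1) : ℝ) * ((j : ℝ) + 1) := by
        exact_mod_cast hc
      have he : m + 1 - (j + 1) = m - j := by omega
      rw [he]
      push_cast
      linear_combination (-((j : ℝ) * r ^ j * r * b ^ (m - j))) * hc'
    rw [Finset.sum_congr rfl key]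
    rw [← Finset.mul_sum, binom_mom1 r b hrb m]
    push_cast
    ring

lemma binom_sum_sub (r b : ℝ) (hrb : r + b = 1) (n : ℕ) :
    ∑ k ∈ range (n + 1), ((n - k : ℕ) : ℝ) * ((n.choose k : ℝ) * r ^ k * b ^ (n - k))
      = (n : ℝ) * b := by
  have key : ∀ k ∈ range (n + 1),
      ((n - k : ℕ) : ℝ) * ((n.choose k : ℝ) * r ^ k * b ^ (n - k))
        = (n : ℝ) * ((n.choose k : ℝ) * r ^ k * b ^ (n - k))
          - (k : ℝ) * ((n.choose k : ℝ) * r ^ k * b ^ (n - k)) := by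
    intro k hk
    have hkn : k ≤ n := by simpa [Nat.lt_succ_iff] using Finset.mem_range.mp hk
    rw [Nat.cast_sub hkn]
    ring
  rw [Finset.sum_congr rfl key, Finset.sum_sub_distrib, ← Finset.mul_sum,
    binom_base r b hrb n, binom_mom1 r b hrb n]
  have hb : b = 1 - r := by linarith
  rw [hb]; ring

lemma binom_sum_mul (r b : ℝ) (hrb : r + b = 1) (n : ℕ) :
    ∑ k ∈ range (n + 1), ((k * (n - k) : ℕ) : ℝ) * ((n.choose k : ℝ) * r ^ k * b ^ (n - k))
      = ((n * (n - 1) : ℕ) : ℝ) * (r * b) := by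
  have key : ∀ k ∈ range (n + 1),
      ((k * (n - k) : ℕ) : ℝ) * ((n.choose k : ℝ) * r ^ k * b ^ (n - k))
        = ((n : ℝ) - 1) * ((k : ℝ) * ((n.choose k : ℝ) * r ^ k * b ^ (n - k)))
          - (k : ℝ) * ((k : ℝ) - 1) * ((n.choose k : ℝ) * r ^ k * b ^ (n - k)) := by
    intro k hk
    have hkn : k ≤ n := by simpa [Nat.lt_succ_iff] using Finset.mem_range.mp hk
    rw [Nat.cast_mul, Nat.cast_sub hkn]
    ring
  rw [Finset.sum_congr rfl key, Finset.sum_sub_distrib, ← Finset.mul_sum,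
    binom_mom1 r b hrb n, binom_mom2 r b hrb n]
  have hb : b = 1 - r := by linarith
  have hcast : ((n * (n - 1) : ℕ) : ℝ) = (n : ℝ) * ((n : ℝ) - 1) := by
    cases n with
    | zero => simp
    | succ m => push_cast [Nat.succ_sub_one]; ring
  rw [hcast, hb]; ring

end BinomAux

lemma multinomialENN_pair (r b : ℝ) (hrb : r + b = 1) (n k m : ℕ) :
    multinomialENN n ![r, b] ![k, m] =
      if k + m = n then ENNReal.ofReal ((n.choose k : ℝ) * r ^ k * b ^ m) else 0 := by
  unfold multinomialENN
  simp only [Fin.sum_univ_two, Fin.prod_univ_two, Matrix.cons_val_zero, Matrix.cons_val_one,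
    Matrix.head_cons]
  by_cases heq : k + m = n
  · rw [if_pos (le_of_eq heq), if_pos heq]
    have hm : m = n - k := by omega
    have hkn : k ≤ n := by omega
    have h0 : n - (k + m) = 0 := by omega
    rw [h0]
    simp only [Nat.factorial_zero, Nat.cast_one, mul_one, pow_zero]
    rw [Nat.cast_choose ℝ hkn, hm, mul_assoc]
  · rw [if_neg heq]
    by_cases hle : k + m ≤ n
    · rw [if_pos hle]
      have hpos : n - (k + m) ≠ 0 := by omega
      rw [hrb]
      norm_num [zero_pow hpos]
    · rw [if_neg hle]

/-- Suppose a random number `X` of balls (with finite second moment) are each painted red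
with probability `r ∈ (0,1)` or blue with probability `b = 1 - r`, so that the numbers
`(R, B)` of red and blue balls form the multinomial marking `(r, b) ∘ X` of `X`. Then:
(i) if `Var(X) < E[X]` then `Cov(R, B) < 0`; (ii) if `Var(X) > E[X]` then `Cov(R, B) > 0`;
(iii) if `Var(X) = E[X]` then `Cov(R, B) = 0`; where
`Cov(R, B) = E[R B] - E[R] E[B]`. -/
theorem red_blue_covariance_sign
    {Ω : Type*} [MeasurableSpace Ω] (P : Measure Ω) [IsProbabilityMeasure P]
    (r : ℝ) (hr : r ∈ Set.Ioo (0 : ℝ) 1) (b : ℝ) (hb : b = 1 - r)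
    (X : Ω → ℕ) (Y : Ω → Fin 2 → ℕ) (hX : Measurable X) (hY : Measurable Y)
    (hX2 : MemLp (fun ω => (X ω : ℝ)) 2 P)
    (hMark : ∀ (n : ℕ) (y : Fin 2 → ℕ),
      P {ω | X ω = n ∧ Y ω = y} = P {ω | X ω = n} * multinomialENN n ![r, b] y)
    (R B : Ω → ℕ) (hR : ∀ ω, R ω = Y ω 0) (hB : ∀ ω, B ω = Y ω 1) :
    (variance (fun ω => (X ω : ℝ)) P < ∫ ω, (X ω : ℝ) ∂P →
      (∫ ω, (R ω : ℝ) * (B ω : ℝ) ∂P)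
        - (∫ ω, (R ω : ℝ) ∂P) * (∫ ω, (B ω : ℝ) ∂P) < 0) ∧
    (∫ ω, (X ω : ℝ) ∂P < variance (fun ω => (X ω : ℝ)) P →
      0 < (∫ ω, (R ω : ℝ) * (B ω : ℝ) ∂P)
        - (∫ ω, (R ω : ℝ) ∂P) * (∫ ω, (B ω : ℝ) ∂P)) ∧
    (variance (fun ω => (X ω : ℝ)) P = ∫ ω, (X ω : ℝ) ∂P →
      (∫ ω, (R ω : ℝ) * (B ω : ℝ) ∂P)
        - (∫ ω, (R ω : ℝ) ∂P) * (∫ ω, (B ω : ℝ) ∂P) = 0) := by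
  obtain ⟨hr0, hr1⟩ := hr
  have hb0 : 0 < b := by rw [hb]; linarith
  have hrb : r + b = 1 := by rw [hb]; ring
  have hRm : Measurable R := by
    have hfun : R = fun ω => Y ω 0 := funext hR
    rw [hfun]; exact (measurable_pi_apply 0).comp hY
  have hBm : Measurable B := by
    have hfun : B = fun ω => Y ω 1 := funext hB
    rw [hfun]; exact (measurable_pi_apply 1).comp hY
  set pn : ℕ → ℝ≥0∞ := fun n => P {ω | X ω = n} with hpn
  -- joint law of (X, R)
  have hjoint : ∀ n k : ℕ, P {ω | X ω = n ∧ R ω = k} =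
      if k ≤ n then pn n * ENNReal.ofReal ((n.choose k : ℝ) * r ^ k * b ^ (n - k)) else 0 := by
    intro n k
    have hdecomp : {ω | X ω = n ∧ R ω = k} = ⋃ m : ℕ, {ω | X ω = n ∧ Y ω = ![k, m]} := by
      ext ω
      simp only [Set.mem_setOf_eq, Set.mem_iUnion]
      constructor
      · rintro ⟨hx, hrk⟩
        refine ⟨Y ω 1, hx, ?_⟩
        funext i
        fin_cases i
        · simp [← hR ω, hrk]
        · simp
      · rintro ⟨m, hx, hy⟩
        exact ⟨hx, by rw [hR, hy]; simp⟩
    have hmeas : ∀ m : ℕ, MeasurableSet {ω | X ω = n ∧ Y ω = ![k, m]} := fun m =>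
      (hX (measurableSet_singleton n)).inter (hY (measurableSet_singleton ![k, m]))
    have hdisj : Pairwise (Function.onFun Disjoint
        fun m : ℕ => {ω | X ω = n ∧ Y ω = ![k, m]}) := by
      intro m m' hne
      simp only [Function.onFun, Set.disjoint_left]
      rintro ω ⟨_, hy⟩ ⟨_, hy'⟩
      apply hne
      have h := hy.symm.trans hy'
      have h1 := congrFun h 1
      simpa using h1
    rw [hdecomp, measure_iUnion hdisj hmeas]
    simp_rw [hMark, multinomialENN_pair r b hrb]
    by_cases hk : k ≤ n
    · rw [if_pos hk]
      rw [tsum_eq_single (n - k) (fun m hm => by rw [if_neg (by omega), mul_zero])]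
      rw [if_pos (by omega)]
    · rw [if_neg hk]
      rw [tsum_congr fun m =>
        show pn n * (if k + m = n then _ else 0) = 0 by rw [if_neg (by omega), mul_zero]]
      exact tsum_zero
  -- almost everywhere R + B = X
  have hae : ∀ᵐ ω ∂P, R ω + B ω = X ω := by
    set T : ℕ × ℕ × ℕ → Set Ω := fun p =>
      {ω | X ω = p.1 ∧ Y ω = ![p.2.1, p.2.2] ∧ p.2.1 + p.2.2 ≠ p.1} with hT
    have hTnull : ∀ p, P (T p) = 0 := by
      rintro ⟨n, k, m⟩
      by_cases hne : k + m ≠ n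
      · refine measure_mono_null (t := {ω | X ω = n ∧ Y ω = ![k, m]})
          (fun ω hω => ⟨hω.1, hω.2.1⟩) ?_
        rw [hMark, multinomialENN_pair r b hrb, if_neg hne, mul_zero]
      · have hempty : T (n, k, m) = ∅ := by
          ext ω
          simp only [hT, Set.mem_setOf_eq, Set.mem_empty_iff_false, iff_false, not_and]
          intro _ _
          push_neg at hne
          simpa using hne
        rw [hempty]; exact measure_empty
    have hcover : {ω | ¬(R ω + B ω = X ω)} ⊆ ⋃ p, T p := by
      intro ω hω
      refine Set.mem_iUnion.mpr ⟨(X ω, Y ω 0, Y ω 1), rfl, ?_, ?_⟩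
      · funext i; fin_cases i <;> simp
      · intro hc
        exact hω (by rw [hR, hB]; exact hc)
    have hnull : P {ω | ¬(R ω + B ω = X ω)} = 0 :=
      measure_mono_null hcover (measure_iUnion_null fun p => hTnull p)
    exact ae_iff.mpr hnull
  -- lintegral reduction to sums
  have hpairm : Measurable fun ω => (X ω, R ω) := hX.prodMk hRm
  have key : ∀ f : ℕ × ℕ → ℝ≥0∞, ∫⁻ ω, f (X ω, R ω) ∂P
      = ∑' n : ℕ, ∑' k : ℕ, f (n, k) * P {ω | X ω = n ∧ R ω = k} := by
    intro f
    calc ∫⁻ ω, f (X ω, R ω) ∂P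
        = ∫⁻ p, f p ∂(P.map fun ω => (X ω, R ω)) :=
          (lintegral_map (measurable_of_countable f) hpairm).symm
      _ = ∑' p : ℕ × ℕ, f p * (P.map fun ω => (X ω, R ω)) {p} := lintegral_countable' f
      _ = ∑' n : ℕ, ∑' k : ℕ, f (n, k) * (P.map fun ω => (X ω, R ω)) {(n, k)} :=
          ENNReal.tsum_prod'
      _ = ∑' n : ℕ, ∑' k : ℕ, f (n, k) * P {ω | X ω = n ∧ R ω = k} := by
          refine tsum_congr fun n => tsum_congr fun k => ?_
          congr 1
          rw [Measure.map_apply hpairm (measurableSet_singleton (n, k))]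
          congr 1
          ext ω
          simp [Prod.ext_iff]
  have keyX : ∀ g : ℕ → ℝ≥0∞, ∫⁻ ω, g (X ω) ∂P = ∑' n : ℕ, g n * pn n := by
    intro g
    calc ∫⁻ ω, g (X ω) ∂P
        = ∫⁻ n, g n ∂(P.map X) := (lintegral_map (measurable_of_countable g) hX).symm
      _ = ∑' n : ℕ, g n * (P.map X) {n} := lintegral_countable' g
      _ = ∑' n : ℕ, g n * pn n := by
          refine tsum_congr fun n => ?_
          congr 1
          rw [Measure.map_apply hX (measurableSet_singleton n)]
          rfl
  -- inner sum evaluation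
  have inner : ∀ (n : ℕ) (g : ℕ → ℕ) (c : ℝ), 0 ≤ c →
      (∑ k ∈ range (n + 1), ((g k : ℕ) : ℝ) * ((n.choose k : ℝ) * r ^ k * b ^ (n - k)) = c) →
      ∑' k : ℕ, ((g k : ℕ) : ℝ≥0∞) * P {ω | X ω = n ∧ R ω = k} = pn n * ENNReal.ofReal c := by
    intro n g c hc hsum
    have h0 : ∀ k ∉ range (n + 1), ((g k : ℕ) : ℝ≥0∞) * P {ω | X ω = n ∧ R ω = k} = 0 := by
      intro k hk
      rw [hjoint n k, if_neg (by simp [Nat.lt_succ_iff] at hk; omega), mul_zero]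
    rw [tsum_eq_sum h0]
    have hterm : ∀ k ∈ range (n + 1), ((g k : ℕ) : ℝ≥0∞) * P {ω | X ω = n ∧ R ω = k}
        = pn n * ENNReal.ofReal (((g k : ℕ) : ℝ) * ((n.choose k : ℝ) * r ^ k * b ^ (n - k))) := by
      intro k hk
      rw [hjoint n k, if_pos (by simp [Nat.lt_succ_iff] at hk; omega)]
      rw [ENNReal.ofReal_mul (Nat.cast_nonneg (g k)), ENNReal.ofReal_natCast]
      ring
    have hnonneg : ∀ k ∈ range (n + 1),
        0 ≤ ((g k : ℕ) : ℝ) * ((n.choose k : ℝ) * r ^ k * b ^ (n - k)) := fun k _ =>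
      mul_nonneg (Nat.cast_nonneg _)
        (mul_nonneg (mul_nonneg (Nat.cast_nonneg _) (pow_nonneg hr0.le _)) (pow_nonneg hb0.le _))
    rw [Finset.sum_congr rfl hterm, ← Finset.mul_sum,
      ← ENNReal.ofReal_sum_of_nonneg hnonneg, hsum]
  -- moments
  set M1 : ℝ≥0∞ := ∑' n : ℕ, (n : ℝ≥0∞) * pn n with hM1def
  set M11 : ℝ≥0∞ := ∑' n : ℕ, ((n * (n - 1) : ℕ) : ℝ≥0∞) * pn n with hM11def
  set M2 : ℝ≥0∞ := ∑' n : ℕ, ((n * n : ℕ) : ℝ≥0∞) * pn n with hM2def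
  have hER : ∫⁻ ω, ((R ω : ℕ) : ℝ≥0∞) ∂P = ENNReal.ofReal r * M1 := by
    have h := key fun p => (p.2 : ℝ≥0∞)
    simp only at h
    rw [h]
    have hn : ∀ n : ℕ, ∑' k : ℕ, (k : ℝ≥0∞) * P {ω | X ω = n ∧ R ω = k}
        = pn n * ENNReal.ofReal ((n : ℝ) * r) := fun n =>
      inner n (fun k => k) ((n : ℝ) * r) (mul_nonneg (Nat.cast_nonneg n) hr0.le)
        (binom_mom1 r b hrb n)
    rw [tsum_congr hn]
    rw [tsum_congr fun n => show pn n * ENNReal.ofReal ((n : ℝ) * r)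
        = ENNReal.ofReal r * ((n : ℝ≥0∞) * pn n) by
      rw [ENNReal.ofReal_mul (Nat.cast_nonneg n), ENNReal.ofReal_natCast]; ring]
    rw [ENNReal.tsum_mul_left]
  have hEB : ∫⁻ ω, ((B ω : ℕ) : ℝ≥0∞) ∂P = ENNReal.ofReal b * M1 := by
    have hcongr : ∫⁻ ω, ((B ω : ℕ) : ℝ≥0∞) ∂P = ∫⁻ ω, ((X ω - R ω : ℕ) : ℝ≥0∞) ∂P := by
      refine lintegral_congr_ae ?_
      filter_upwards [hae] with ω h
      have : B ω = X ω - R ω := by omega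
      rw [this]
    rw [hcongr]
    have h := key fun p => ((p.1 - p.2 : ℕ) : ℝ≥0∞)
    simp only at h
    rw [h]
    have hn : ∀ n : ℕ, ∑' k : ℕ, ((n - k : ℕ) : ℝ≥0∞) * P {ω | X ω = n ∧ R ω = k}
        = pn n * ENNReal.ofReal ((n : ℝ) * b) := fun n =>
      inner n (fun k => n - k) ((n : ℝ) * b) (mul_nonneg (Nat.cast_nonneg n) hb0.le)
        (binom_sum_sub r b hrb n)
    rw [tsum_congr hn]
    rw [tsum_congr fun n => show pn n * ENNReal.ofReal ((n : ℝ) * b)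
        = ENNReal.ofReal b * ((n : ℝ≥0∞) * pn n) by
      rw [ENNReal.ofReal_mul (Nat.cast_nonneg n), ENNReal.ofReal_natCast]; ring]
    rw [ENNReal.tsum_mul_left]
  have hERB : ∫⁻ ω, ((R ω * B ω : ℕ) : ℝ≥0∞) ∂P = ENNReal.ofReal (r * b) * M11 := by
    have hcongr : ∫⁻ ω, ((R ω * B ω : ℕ) : ℝ≥0∞) ∂P
        = ∫⁻ ω, ((R ω * (X ω - R ω) : ℕ) : ℝ≥0∞) ∂P := by
      refine lintegral_congr_ae ?_
      filter_upwards [hae] with ω h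
      have : B ω = X ω - R ω := by omega
      rw [this]
    rw [hcongr]
    have h := key fun p => ((p.2 * (p.1 - p.2) : ℕ) : ℝ≥0∞)
    simp only at h
    rw [h]
    have hn : ∀ n : ℕ, ∑' k : ℕ, ((k * (n - k) : ℕ) : ℝ≥0∞) * P {ω | X ω = n ∧ R ω = k}
        = pn n * ENNReal.ofReal (((n * (n - 1) : ℕ) : ℝ) * (r * b)) := fun n =>
      inner n (fun k => k * (n - k)) (((n * (n - 1) : ℕ) : ℝ) * (r * b))
        (mul_nonneg (Nat.cast_nonneg _) (mul_nonneg hr0.le hb0.le))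
        (binom_sum_mul r b hrb n)
    rw [tsum_congr hn]
    rw [tsum_congr fun n => show pn n * ENNReal.ofReal (((n * (n - 1) : ℕ) : ℝ) * (r * b))
        = ENNReal.ofReal (r * b) * (((n * (n - 1) : ℕ) : ℝ≥0∞) * pn n) by
      rw [ENNReal.ofReal_mul (Nat.cast_nonneg _), ENNReal.ofReal_natCast]; ring]
    rw [ENNReal.tsum_mul_left]
  have hEX : ∫⁻ ω, ((X ω : ℕ) : ℝ≥0∞) ∂P = M1 := by
    have h := keyX fun n => (n : ℝ≥0∞)
    exact h
  have hEX2 : ∫⁻ ω, ((X ω * X ω : ℕ) : ℝ≥0∞) ∂P = M2 := by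
    have h := keyX fun n => ((n * n : ℕ) : ℝ≥0∞)
    exact h
  -- finiteness
  have hM2lt : M2 < ⊤ := by
    have hint : Integrable (fun ω => (X ω : ℝ) ^ 2) P := hX2.integrable_sq
    have hlt := hint.lintegral_lt_top
    have heq : ∫⁻ ω, ENNReal.ofReal ((X ω : ℝ) ^ 2) ∂P
        = ∫⁻ ω, ((X ω * X ω : ℕ) : ℝ≥0∞) ∂P := by
      refine lintegral_congr fun ω => ?_
      rw [← ENNReal.ofReal_natCast (X ω * X ω)]
      congr 1
      push_cast
      ring
    rw [heq, hEX2] at hlt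
    exact hlt
  have hself : ∀ n : ℕ, n ≤ n * n := by
    intro n
    cases n with
    | zero => exact le_refl 0
    | succ m => exact Nat.le_mul_of_pos_left _ (Nat.succ_pos m)
  have hle1 : M1 ≤ M2 := by
    refine Summable.tsum_le_tsum (fun n => ?_) ENNReal.summable ENNReal.summable
    exact mul_le_mul_left (by exact_mod_cast hself n) _
  have hle11 : M11 ≤ M2 := by
    refine Summable.tsum_le_tsum (fun n => ?_) ENNReal.summable ENNReal.summable
    exact mul_le_mul_left (by exact_mod_cast Nat.mul_le_mul_left n (Nat.sub_le n 1)) _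
  have hM1ne : M1 ≠ ⊤ := (lt_of_le_of_lt hle1 hM2lt).ne
  have hM11ne : M11 ≠ ⊤ := (lt_of_le_of_lt hle11 hM2lt).ne
  -- split M2 = M11 + M1
  have hsplit : M2 = M11 + M1 := by
    rw [hM2def, hM11def, hM1def, ← ENNReal.tsum_add]
    refine tsum_congr fun n => ?_
    have hnat : n * n = n * (n - 1) + n := by
      cases n with
      | zero => rfl
      | succ m => simp [Nat.succ_sub_one]; ring
    rw [hnat]
    push_cast
    ring
  -- real integrals
  have hRmr : Measurable fun ω => (R ω : ℝ) := (measurable_of_countable _).comp hRm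
  have hBmr : Measurable fun ω => (B ω : ℝ) := (measurable_of_countable _).comp hBm
  have hIR : ∫ ω, (R ω : ℝ) ∂P = (ENNReal.ofReal r * M1).toReal := by
    rw [integral_eq_lintegral_of_nonneg_ae (Filter.Eventually.of_forall fun ω =>
      Nat.cast_nonneg (R ω)) hRmr.aestronglyMeasurable]
    rw [← hER]
    congr 1
    exact lintegral_congr fun ω => ENNReal.ofReal_natCast (R ω)
  have hIB : ∫ ω, (B ω : ℝ) ∂P = (ENNReal.ofReal b * M1).toReal := by
    rw [integral_eq_lintegral_of_nonneg_ae (Filter.Eventually.of_forall fun ω =>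
      Nat.cast_nonneg (B ω)) hBmr.aestronglyMeasurable]
    rw [← hEB]
    congr 1
    exact lintegral_congr fun ω => ENNReal.ofReal_natCast (B ω)
  have hIRB : ∫ ω, (R ω : ℝ) * (B ω : ℝ) ∂P = (ENNReal.ofReal (r * b) * M11).toReal := by
    rw [integral_eq_lintegral_of_nonneg_ae (Filter.Eventually.of_forall fun ω =>
      mul_nonneg (Nat.cast_nonneg (R ω)) (Nat.cast_nonneg (B ω)))
      (hRmr.mul hBmr).aestronglyMeasurable]
    rw [← hERB]
    congr 1
    refine lintegral_congr fun ω => ?_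
    rw [← ENNReal.ofReal_natCast (R ω * B ω)]
    congr 1
    push_cast
    ring
  have hIX : ∫ ω, (X ω : ℝ) ∂P = M1.toReal := by
    rw [integral_eq_lintegral_of_nonneg_ae (Filter.Eventually.of_forall fun ω =>
      Nat.cast_nonneg (X ω)) ((measurable_of_countable _).comp hX).aestronglyMeasurable]
    rw [← hEX]
    congr 1
    exact lintegral_congr fun ω => ENNReal.ofReal_natCast (X ω)
  have hIX2 : ∫ ω, (X ω : ℝ) ^ 2 ∂P = M2.toReal := by
    rw [integral_eq_lintegral_of_nonneg_ae (Filter.Eventually.of_forall fun ω =>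
      sq_nonneg ((X ω : ℝ))) (((measurable_of_countable _).comp hX).pow_const 2).aestronglyMeasurable]
    rw [← hEX2]
    congr 1
    refine lintegral_congr fun ω => ?_
    rw [← ENNReal.ofReal_natCast (X ω * X ω)]
    congr 1
    push_cast
    ring
  have hvar : variance (fun ω => (X ω : ℝ)) P = M2.toReal - M1.toReal ^ 2 := by
    rw [variance_eq_sub hX2]
    have h2 : (∫ ω, ((fun ω => (X ω : ℝ)) ^ 2) ω ∂P) = M2.toReal := by
      rw [← hIX2]
      exact integral_congr_ae (Filter.Eventually.of_forall fun ω => by simp)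
    rw [h2, hIX]
  -- assemble
  have hm : M2.toReal = M11.toReal + M1.toReal := by
    rw [hsplit]
    exact ENNReal.toReal_add hM11ne hM1ne
  have hcov : (∫ ω, (R ω : ℝ) * (B ω : ℝ) ∂P)
      - (∫ ω, (R ω : ℝ) ∂P) * (∫ ω, (B ω : ℝ) ∂P)
      = (r * b) * (variance (fun ω => (X ω : ℝ)) P - ∫ ω, (X ω : ℝ) ∂P) := by
    rw [hIRB, hIR, hIB, hvar, hIX]
    rw [ENNReal.toReal_mul, ENNReal.toReal_mul, ENNReal.toReal_mul]
    rw [ENNReal.toReal_ofReal (mul_nonneg hr0.le hb0.le), ENNReal.toReal_ofReal hr0.le,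
      ENNReal.toReal_ofReal hb0.le]
    linear_combination (-(r * b)) * hm
  have hrbpos : 0 < r * b := mul_pos hr0 hb0
  refine ⟨fun h => ?_, fun h => ?_, fun h => ?_⟩
  · rw [hcov]
    exact mul_neg_of_pos_of_neg hrbpos (by linarith)
  · rw [hcov]
    exact mul_pos hrbpos (by linarith)
  · rw [hcov, h, sub_self, mul_zero]
end
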